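/- Let d = (d_0,...,d_c) be a degree sequence. Then the pure diagrams with degree sequence d form a one-dimensional rational vector space: if D is a diagram supported on d satisfying the Herzog–Kuhl equations Σ_i (−1)^i d_i^t D_i = 0 for 0 ≤ t ≤ c−1, then D is a scalar multiple of π(d), where π(d)_{i,d_i} = ∏_{k≠i} 1/|d_i − d_k|. -/

import Mathlib

open Finset Polynomial


/-- Pure diagrams on a fixed degree sequence form a one-dimensional space: any
diagram supported on `d` satisfying the Herzog–Kuhl equations is a scalar multiple
of the pure diagram `π(d)`. -/
theorem supported_HK_diagram_is_multiple_of_pure (c : ℕ) (d : Fin (c + 1) → ℤ)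
    (hd : StrictMono d) (D : Fin (c + 1) → ℚ)
    (hHK : ∀ t : ℕ, t < c →
      ∑ i : Fin (c + 1), (-1 : ℚ) ^ (i : ℕ) * (d i : ℚ) ^ t * D i = 0) :
    ∃ q : ℚ, ∀ i : Fin (c + 1),
      D i = q * ∏ k ∈ Finset.univ.erase i, (1 / |(d i : ℚ) - (d k : ℚ)|) := by
  set u : Fin (c+1) → ℚ := fun i => ∏ k ∈ Finset.univ.erase i, ((d i : ℚ) - (d k : ℚ)) with hu
  have hdne : ∀ {i k : Fin (c+1)}, k ≠ i → (d i : ℚ) - (d k : ℚ) ≠ 0 := by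
    intro i k hki
    intro h
    have h2 : (d i : ℚ) = (d k : ℚ) := sub_eq_zero.mp h
    have h3 : d i = d k := by exact_mod_cast h2
    exact hki (hd.injective h3).symm
  -- Step A
  have stepA : ∀ P : Polynomial ℚ, P.natDegree < c →
      ∑ i : Fin (c + 1), (-1 : ℚ) ^ (i : ℕ) * P.eval ((d i : ℚ)) * D i = 0 := by
    intro P hP
    have key : ∀ i : Fin (c+1), (-1 : ℚ) ^ (i : ℕ) * P.eval ((d i : ℚ)) * D i
        = ∑ t ∈ range c, P.coeff t * ((-1 : ℚ) ^ (i : ℕ) * (d i : ℚ) ^ t * D i) := by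
      intro i
      rw [Polynomial.eval_eq_sum_range' hP, Finset.mul_sum, Finset.sum_mul]
      exact Finset.sum_congr rfl fun t _ => by ring
    calc ∑ i : Fin (c + 1), (-1 : ℚ) ^ (i : ℕ) * P.eval ((d i : ℚ)) * D i
        = ∑ t ∈ range c, ∑ i : Fin (c+1), P.coeff t * ((-1 : ℚ) ^ (i : ℕ) * (d i : ℚ) ^ t * D i) := by
          simp_rw [key]
          exact Finset.sum_comm
      _ = 0 := by
          refine Finset.sum_eq_zero fun t ht => ?_
          rw [← Finset.mul_sum, hHK t (mem_range.mp ht), mul_zero]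
  -- Step B
  have stepB : ∀ i : Fin (c+1), (-1 : ℚ) ^ (i : ℕ) * u i * D i = u 0 * D 0 := by
    intro i
    by_cases hi0 : i = 0
    · subst hi0; simp
    · set S : Finset (Fin (c+1)) := (Finset.univ.erase 0).erase i with hS
      have hiS : i ∈ Finset.univ.erase (0 : Fin (c+1)) := by
        simp [hi0]
      have hcard : S.card = c - 1 := by
        rw [hS, Finset.card_erase_of_mem hiS, Finset.card_erase_of_mem (Finset.mem_univ _)]
        simp
      have hc1 : 1 ≤ c := by
        rcases Fin.pos_iff_ne_zero.mpr hi0 with h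
        omega
      set P : Polynomial ℚ := ∏ k ∈ S, (X - C ((d k : ℚ))) with hP
      have hdeg : P.natDegree < c := by
        rw [hP, Polynomial.natDegree_prod_of_monic _ _ (fun k _ => monic_X_sub_C _)]
        simp only [Polynomial.natDegree_X_sub_C]
        rw [Finset.sum_const, smul_eq_mul, mul_one, hcard]
        omega
      have heval : ∀ j : Fin (c+1), P.eval ((d j : ℚ)) = ∏ k ∈ S, ((d j : ℚ) - (d k : ℚ)) := by
        intro j; rw [hP]; simp [Polynomial.eval_prod]
      have hsum := stepA P hdeg
      have hvanish : ∀ j ∈ Finset.univ, j ∉ ({0, i} : Finset (Fin (c+1))) →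
          (-1 : ℚ) ^ (j : ℕ) * P.eval ((d j : ℚ)) * D j = 0 := by
        intro j _ hj
        simp only [Finset.mem_insert, Finset.mem_singleton, not_or] at hj
        have hjS : j ∈ S := by simp [hS, hj.1, hj.2]
        rw [heval j, Finset.prod_eq_zero hjS (by simp)]
        ring
      have hpair : ∑ j ∈ ({0, i} : Finset (Fin (c+1))), (-1 : ℚ) ^ (j : ℕ) * P.eval ((d j : ℚ)) * D j = 0 := by
        rw [Finset.sum_subset (Finset.subset_univ _) hvanish]
        exact hsum
      rw [Finset.sum_pair (Ne.symm hi0)] at hpair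
      rw [heval 0, heval i] at hpair
      have h1 : u 0 = ((d 0 : ℚ) - (d i : ℚ)) * ∏ k ∈ S, ((d 0 : ℚ) - (d k : ℚ)) :=
        (Finset.mul_prod_erase _ _ hiS).symm
      have h2 : u i = ((d i : ℚ) - (d 0 : ℚ)) * ∏ k ∈ S, ((d i : ℚ) - (d k : ℚ)) := by
        show (∏ k ∈ Finset.univ.erase i, ((d i : ℚ) - (d k : ℚ))) = _
        have h0i : (0 : Fin (c+1)) ∈ Finset.univ.erase i := by simp [Ne.symm hi0]
        rw [← Finset.mul_prod_erase _ _ h0i, hS, Finset.erase_right_comm]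
      simp only [Fin.val_zero, pow_zero, one_mul] at hpair
      linear_combination (-1 : ℚ) ^ (i : ℕ) * D i * h2 - D 0 * h1
        - (((d 0 : ℚ) - (d i : ℚ))) * hpair
  -- Step C: sign
  have stepC : ∀ i : Fin (c+1), u i = (-1 : ℚ) ^ (c - (i : ℕ)) *
      ∏ k ∈ Finset.univ.erase i, |(d i : ℚ) - (d k : ℚ)| := by
    intro i
    have hfac : ∀ k ∈ Finset.univ.erase i, ((d i : ℚ) - (d k : ℚ)) =
        (if k < i then (1 : ℚ) else -1) * |(d i : ℚ) - (d k : ℚ)| := by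
      intro k hk
      have hki : k ≠ i := (Finset.mem_erase.mp hk).1
      by_cases h : k < i
      · have : (d k : ℚ) < (d i : ℚ) := by exact_mod_cast hd h
        rw [if_pos h, abs_of_pos (by linarith), one_mul]
      · have hik : i < k := lt_of_le_of_ne (not_lt.mp h) (Ne.symm hki)
        have : (d i : ℚ) < (d k : ℚ) := by exact_mod_cast hd hik
        rw [if_neg h, abs_of_neg (by linarith)]
        ring
    show (∏ k ∈ Finset.univ.erase i, ((d i : ℚ) - (d k : ℚ))) = _
    rw [Finset.prod_congr rfl hfac, Finset.prod_mul_distrib]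
    congr 1
    rw [Finset.prod_ite, Finset.prod_const_one, one_mul, Finset.prod_const]
    congr 1
    have hfil : (Finset.univ.erase i).filter (fun k => ¬ k < i) = Finset.Ioi i := by
      ext k
      simp only [Finset.mem_filter, Finset.mem_erase, Finset.mem_univ, true_and,
        Finset.mem_Ioi, not_lt, and_true]
      constructor
      · rintro ⟨hne, hle⟩; exact lt_of_le_of_ne hle (Ne.symm hne)
      · intro h; exact ⟨Ne.symm (ne_of_lt h), le_of_lt h⟩
    rw [hfil, Fin.card_Ioi]
    simp
  -- assemble
  have hAne : ∀ i : Fin (c+1), (∏ k ∈ Finset.univ.erase i, |(d i : ℚ) - (d k : ℚ)|) ≠ 0 := by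
    intro i
    refine Finset.prod_ne_zero_iff.mpr fun k hk => ?_
    exact abs_ne_zero.mpr (hdne (Finset.mem_erase.mp hk).1)
  refine ⟨(-1 : ℚ) ^ c * (u 0 * D 0), fun i => ?_⟩
  set A : ℚ := ∏ k ∈ Finset.univ.erase i, |(d i : ℚ) - (d k : ℚ)| with hA
  have hprod : ∏ k ∈ Finset.univ.erase i, (1 / |(d i : ℚ) - (d k : ℚ)|) = A⁻¹ := by
    rw [hA, ← Finset.prod_inv_distrib]
    exact Finset.prod_congr rfl fun k _ => one_div _
  rw [hprod]
  have hpow : (-1 : ℚ) ^ (i : ℕ) * (-1 : ℚ) ^ (c - (i : ℕ)) = (-1 : ℚ) ^ c := by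
    rw [← pow_add]
    congr 1
    have := i.is_le
    omega
  have key : (-1 : ℚ) ^ c * A * D i = u 0 * D 0 := by
    rw [← hpow]
    have := stepB i
    rw [stepC i] at this
    linear_combination this
  have h11 : (-1 : ℚ) ^ c * (-1 : ℚ) ^ c = 1 := by
    rw [← pow_add]
    exact Even.neg_one_pow ⟨c, rfl⟩
  calc D i = ((-1 : ℚ) ^ c * (-1 : ℚ) ^ c) * D i := by rw [h11, one_mul]
    _ = (-1 : ℚ) ^ c * (u 0 * D 0) * A⁻¹ := by
        rw [← key]
        field_simp [hA ▸ hAne i]
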